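/- For the factorization S_n = C_n · S_{n-1}, the stabilizer in S_{n-1} of the element z = (1,2,...,n) ∈ C_n under the action ◁ equals {a ∈ S_{n-1} : a(n-1) = n-1}, which is isomorphic to S_{n-2}. -/

import Mathlib

open Equiv Equiv.Perm

private lemma zpows_fix_last {n : ℕ} (hn : 1 ≤ n) {w : Equiv.Perm (Fin (n + 1))}
    (hw : w ∈ Subgroup.zpowers (finRotate (n + 1))) (hfix : w (Fin.last n) = Fin.last n) :
    w = 1 := by
  obtain ⟨k, hk⟩ := (Submonoid.mem_powers_iff _ _).mp (mem_powers_iff_mem_zpowers.mpr hw)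
  have hc : IsCycle (finRotate (n + 1)) := isCycle_finRotate_of_le (by omega)
  have hx : finRotate (n + 1) (Fin.last n) ≠ Fin.last n := by
    rw [finRotate_last]
    intro h
    have := congrArg Fin.val h
    simp at this
    omega
  rw [← hk]
  exact (hc.pow_eq_one_iff' hx).mpr (by rw [hk]; exact hfix)

private lemma rot_apply {n : ℕ} (hn : 1 ≤ n) :
    finRotate (n + 1) ⟨n - 1, (Nat.lt_of_le_of_lt (Nat.sub_le n 1) (Nat.lt_succ_self n))⟩ = Fin.last n := by
  have h : (⟨n - 1, by omega⟩ : Fin (n + 1)) ≠ Fin.last n := by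
    intro h
    have := congrArg Fin.val h
    simp at this
    omega
  apply Fin.ext
  rw [coe_finRotate_of_ne_last h]
  simp
  omega

private def finSubEquiv (n : ℕ) : Fin (n - 1) ≃ {x : Fin (n + 1) // (x : ℕ) < n - 1} where
  toFun i := ⟨⟨i.1, by omega⟩, i.2⟩
  invFun x := ⟨x.1.1, x.2⟩
  left_inv i := rfl
  right_inv x := rfl

private lemma iso_aux (n : ℕ) (hn : 1 ≤ n) :
    Nonempty ((MulAction.stabilizer (Equiv.Perm (Fin (n + 1))) (Fin.last n) ⊓
        MulAction.stabilizer (Equiv.Perm (Fin (n + 1))) (⟨n - 1, (Nat.lt_of_le_of_lt (Nat.sub_le n 1) (Nat.lt_succ_self n))⟩ : Fin (n + 1)) :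
        Subgroup (Equiv.Perm (Fin (n + 1)))) ≃* Equiv.Perm (Fin (n - 1))) := by
  set q := finSubEquiv n with hq
  have hmem : ∀ σ : Equiv.Perm (Fin (n + 1)), σ (Fin.last n) = Fin.last n →
      σ ⟨n - 1, by omega⟩ = ⟨n - 1, by omega⟩ →
      ∀ x : Fin (n + 1), ((x : ℕ) < n - 1 ↔ ((σ x : Fin (n + 1)) : ℕ) < n - 1) := by
    intro σ h1 h2 x
    constructor
    · intro hx
      rcases Nat.lt_trichotomy ((σ x : Fin (n + 1)) : ℕ) (n - 1) with h | h | h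
      · exact h
      · exfalso
        have : σ x = σ ⟨n - 1, by omega⟩ := by rw [h2]; exact Fin.ext h
        have := σ.injective this
        rw [this] at hx
        simp at hx
      · exfalso
        have hlt := (σ x).isLt
        have hv : ((σ x : Fin (n + 1)) : ℕ) = n := by omega
        have : σ x = σ (Fin.last n) := by rw [h1]; exact Fin.ext (by simpa using hv)
        have := σ.injective this
        rw [this] at hx
        simp at hx
        omega
    · intro hx
      by_contra hc
      push_neg at hc
      have hlt := x.isLt
      have : (x : ℕ) = n - 1 ∨ (x : ℕ) = n := by omega
      rcases this with h | h
      · have hx' : x = ⟨n - 1, by omega⟩ := Fin.ext h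
        rw [hx', h2] at hx
        simp at hx
      · have hx' : x = Fin.last n := Fin.ext (by simpa using h)
        rw [hx', h1] at hx
        simp at hx
        omega
  have stab_of_mem : ∀ σh : (MulAction.stabilizer (Equiv.Perm (Fin (n + 1))) (Fin.last n) ⊓
        MulAction.stabilizer (Equiv.Perm (Fin (n + 1))) (⟨n - 1, by omega⟩ : Fin (n + 1)) :
        Subgroup (Equiv.Perm (Fin (n + 1)))),
      (σh : Equiv.Perm (Fin (n + 1))) (Fin.last n) = Fin.last n ∧
      (σh : Equiv.Perm (Fin (n + 1))) ⟨n - 1, by omega⟩ = ⟨n - 1, by omega⟩ := by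
    intro σh
    obtain ⟨hA, hB⟩ := Subgroup.mem_inf.mp σh.2
    exact ⟨hA, hB⟩
  refine ⟨MulEquiv.symm (MulEquiv.mk' ⟨
    fun π => ⟨π.extendDomain q, ?_⟩,
    fun σh => q.permCongr.symm ((σh : Equiv.Perm (Fin (n + 1))).subtypePerm
      (fun x => (hmem _ (stab_of_mem σh).1 (stab_of_mem σh).2 x).symm)),
    ?_, ?_⟩ ?_)⟩
  · refine Subgroup.mem_inf.mpr ⟨?_, ?_⟩
    · show π.extendDomain q • (Fin.last n) = Fin.last n
      rw [Equiv.Perm.smul_def]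
      exact Perm.extendDomain_apply_not_subtype π q (by simp)
    · show π.extendDomain q • (⟨n - 1, by omega⟩ : Fin (n + 1)) = ⟨n - 1, by omega⟩
      rw [Equiv.Perm.smul_def]
      exact Perm.extendDomain_apply_not_subtype π q (by simp)
  · intro π
    ext i
    simp [Equiv.permCongr_symm, Equiv.permCongr_apply, Perm.subtypePerm_apply,
      Perm.extendDomain_apply_subtype, hq, finSubEquiv]
  · intro σh
    apply Subtype.ext
    ext x
    by_cases hx : (x : ℕ) < n - 1
    · rw [Perm.extendDomain_apply_subtype _ q hx]
      simp [hq, finSubEquiv]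
    · rw [Perm.extendDomain_apply_not_subtype _ q hx]
      have hlt := x.isLt
      have : (x : ℕ) = n - 1 ∨ (x : ℕ) = n := by omega
      rcases this with h | h
      · have hx' : x = ⟨n - 1, by omega⟩ := Fin.ext h
        rw [hx', (stab_of_mem σh).2]
      · have hx' : x = Fin.last n := Fin.ext (by simpa using h)
        rw [hx', (stab_of_mem σh).1]
  · intro π ρ
    exact Subtype.ext (Perm.extendDomain_mul q π ρ).symm

set_option maxHeartbeats 1000000 in
theorem stabilizer_of_cycle (n : ℕ) (hn : 1 ≤ n)
    (rhd : Subgroup.zpowers (finRotate (n + 1)) →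
      MulAction.stabilizer (Equiv.Perm (Fin (n + 1))) (Fin.last n) →
      MulAction.stabilizer (Equiv.Perm (Fin (n + 1))) (Fin.last n))
    (lhd : Subgroup.zpowers (finRotate (n + 1)) →
      MulAction.stabilizer (Equiv.Perm (Fin (n + 1))) (Fin.last n) →
      Subgroup.zpowers (finRotate (n + 1)))
    (hfac : ∀ (x : Subgroup.zpowers (finRotate (n + 1)))
      (a : MulAction.stabilizer (Equiv.Perm (Fin (n + 1))) (Fin.last n)),
      (x : Equiv.Perm (Fin (n + 1))) * (a : Equiv.Perm (Fin (n + 1))) =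
      (rhd x a : Equiv.Perm (Fin (n + 1))) * (lhd x a : Equiv.Perm (Fin (n + 1)))) :
    (∀ a : MulAction.stabilizer (Equiv.Perm (Fin (n + 1))) (Fin.last n),
      lhd ⟨finRotate (n + 1), Subgroup.mem_zpowers _⟩ a =
          ⟨finRotate (n + 1), Subgroup.mem_zpowers _⟩ ↔
        (a : Equiv.Perm (Fin (n + 1))) ⟨n - 1, by omega⟩ = ⟨n - 1, by omega⟩) ∧
    Nonempty ((MulAction.stabilizer (Equiv.Perm (Fin (n + 1))) (Fin.last n) ⊓
        MulAction.stabilizer (Equiv.Perm (Fin (n + 1))) (⟨n - 1, by omega⟩ : Fin (n + 1)) :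
        Subgroup (Equiv.Perm (Fin (n + 1)))) ≃* Equiv.Perm (Fin (n - 1))) := by
  have hz1 : finRotate (n + 1) ⟨n - 1, by omega⟩ = Fin.last n := rot_apply hn
  have hz1' : (finRotate (n + 1))⁻¹ (Fin.last n) = ⟨n - 1, by omega⟩ := by
    rw [Equiv.Perm.inv_eq_iff_eq, hz1]
  constructor
  · intro a
    set zz : Subgroup.zpowers (finRotate (n + 1)) :=
      ⟨finRotate (n + 1), Subgroup.mem_zpowers _⟩ with hzz
    have h1 : finRotate (n + 1) * (a : Equiv.Perm (Fin (n + 1))) =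
        (rhd zz a : Equiv.Perm (Fin (n + 1))) * (lhd zz a : Equiv.Perm (Fin (n + 1))) :=
      hfac zz a
    have ha : (a : Equiv.Perm (Fin (n + 1))) (Fin.last n) = Fin.last n := a.2
    have hR : (rhd zz a : Equiv.Perm (Fin (n + 1))) (Fin.last n) = Fin.last n := (rhd zz a).2
    constructor
    · intro h
      have hL : (lhd zz a : Equiv.Perm (Fin (n + 1))) = finRotate (n + 1) :=
        Subtype.ext_iff.mp h
      rw [hL] at h1
      have ha' : (a : Equiv.Perm (Fin (n + 1))) =
          (finRotate (n + 1))⁻¹ * ((rhd zz a : Equiv.Perm (Fin (n + 1))) * finRotate (n + 1)) :=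
        eq_inv_mul_iff_mul_eq.mpr (by rw [h1])
      rw [ha']
      simp only [Equiv.Perm.mul_apply]
      rw [hz1, hR, hz1']
    · intro h
      have hL : (lhd zz a : Equiv.Perm (Fin (n + 1))) =
          (rhd zz a : Equiv.Perm (Fin (n + 1)))⁻¹ *
            (finRotate (n + 1) * (a : Equiv.Perm (Fin (n + 1)))) :=
        (inv_mul_eq_iff_eq_mul.mpr (by rw [h1])).symm
      have hw : (lhd zz a : Equiv.Perm (Fin (n + 1))) * (finRotate (n + 1))⁻¹ ∈
          Subgroup.zpowers (finRotate (n + 1)) :=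
        Subgroup.mul_mem _ (lhd zz a).2 (Subgroup.inv_mem _ (Subgroup.mem_zpowers _))
      have e1 : (lhd zz a : Equiv.Perm (Fin (n + 1))) ⟨n - 1, by omega⟩ = Fin.last n := by
        rw [hL]
        simp only [Equiv.Perm.mul_apply]
        rw [h, hz1]
        exact Equiv.Perm.inv_eq_iff_eq.mpr hR.symm
      have hfixw : ((lhd zz a : Equiv.Perm (Fin (n + 1))) * (finRotate (n + 1))⁻¹)
          (Fin.last n) = Fin.last n := by
        simp only [Equiv.Perm.mul_apply]
        rw [hz1', e1]
      have hone := zpows_fix_last hn hw hfixw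
      exact Subtype.ext (mul_inv_eq_one.mp hone)
  · exact iso_aux n hn
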